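/- Let ⟨ℕ, S⟩ be the successor graph on the natural numbers, i.e. S x y ⟺ y = x + 1. There exist an index set I and an ultrafilter D on I such that the ultrapower ^I⟨ℕ,S⟩/D is isomorphic, as a directed graph, to the ultrafilter extension ⟨Uf(ℕ), S^ue⟩; that is, there is a bijection h from the ultrapower onto Uf(ℕ) such that S* [f] [g] ⟺ S^ue h([f]) h([g]) for all elements [f], [g] of the ultrapower. -/

import Mathlib

open Set Filter FirstOrder Language

/-- `R⁻(X)`: the set of elements having an `R`-successor in `X`. -/
def Rminus {W : Type*} (R : W → W → Prop) (X : Set W) : Set W := {w | ∃ s ∈ X, R w s}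

/-- `R⁺(X)`: the set of elements having an `R`-predecessor in `X`. -/
def Rplus {W : Type*} (R : W → W → Prop) (X : Set W) : Set W := {s | ∃ w ∈ X, R w s}

/-- The relation of the ultrafilter extension: `R^ue u v ↔ ∀ X ∈ v, R⁻(X) ∈ u`. -/
def ueRel {W : Type*} (R : W → W → Prop) (u v : Ultrafilter W) : Prop :=
  ∀ X ∈ v, Rminus R X ∈ u

/-- Out-degree `deg⁺(w)`, as an extended natural number. -/
noncomputable def degPlus {W : Type*} (R : W → W → Prop) (w : W) : ℕ∞ := {v | R w v}.encard

/-- In-degree `deg⁻(w)`, as an extended natural number. -/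
noncomputable def degMinus {W : Type*} (R : W → W → Prop) (w : W) : ℕ∞ := {v | R v w}.encard

/-- A directed graph is bounded if `deg(w) = deg⁺(w) + deg⁻(w)` is uniformly bounded. -/
def Bounded {W : Type*} (R : W → W → Prop) : Prop :=
  ∃ n : ℕ, ∀ w, degPlus R w + degMinus R w ≤ (n : ℕ∞)

/-- A directed graph `⟨W,R⟩` as a structure for the first-order language `L_R` with a
single binary relation symbol (`Language.graph`). -/
def grStruct {W : Type*} (R : W → W → Prop) : Language.graph.Structure W where
  RelMap | .adj => fun x => R (x 0) (x 1)

/-- `D` is ℵ₁-incomplete: some countable family of members of `D` has empty intersection. -/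
def Aleph1Incomplete {I : Type*} (D : Ultrafilter I) : Prop :=
  ∃ J : ℕ → Set I, (∀ n, J n ∈ D) ∧ ⋂ n, J n = ∅

/-- The `n`-Hull `⟨w⟩ⁿ`: `⟨w⟩⁰ = {w}`, `⟨w⟩^{i+1} = ⟨w⟩^i ∪ R⁺(⟨w⟩^i) ∪ R⁻(⟨w⟩^i)`. -/
def hull {W : Type*} (R : W → W → Prop) (w : W) : ℕ → Set W
  | 0 => {w}
  | n + 1 => hull R w n ∪ Rplus R (hull R w n) ∪ Rminus R (hull R w n)

/-- The ω-Hull `⟨w⟩^ω = ⋃ₙ ⟨w⟩ⁿ`. -/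
def hullOmega {W : Type*} (R : W → W → Prop) (w : W) : Set W := ⋃ n, hull R w n

/-- A pointed isomorphism between the induced subgraphs on `A ⊆ V` and `A' ⊆ V'`
sending the base point `a` to `a'`. -/
def PointedIso {V V' : Type*} (R : V → V → Prop) (R' : V' → V' → Prop)
    (A : Set V) (A' : Set V') (a : V) (a' : V') : Prop :=
  ∃ f : V → V', Set.BijOn f A A' ∧ f a = a' ∧
    ∀ x ∈ A, ∀ y ∈ A, (R x y ↔ R' (f x) (f y))

/-- The successor relation on ℕ. -/
def Srel (x y : ℕ) : Prop := y = x + 1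


section Aux
open Function Cardinal

namespace MonoUnary

variable {α : Type*}

/-- `x` is infinitely divisible under `σ`. -/
def IsInf (σ : α → α) (x : α) : Prop := ∀ k : ℕ, ∃ y, σ^[k] y = x

lemma isInf_succ {σ : α → α} {x : α} (h : IsInf σ x) : IsInf σ (σ x) := by
  intro k
  obtain ⟨y, hy⟩ := h k
  exact ⟨σ y, by rw [← Function.iterate_succ_apply, Function.iterate_succ_apply', hy]⟩

lemma isInf_pred {σ : α → α} (hσ : Injective σ) {x : α} (h : IsInf σ (σ x)) : IsInf σ x := by
  intro k
  obtain ⟨y, hy⟩ := h (k + 1)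
  rw [Function.iterate_succ_apply'] at hy
  exact ⟨y, hσ hy⟩

lemma notInf_iter {σ : α → α} (hσ : Injective σ) {b : α} (hb : ∀ x, σ x ≠ b) (n : ℕ) :
    ¬ IsInf σ (σ^[n] b) := by
  intro h
  obtain ⟨y, hy⟩ := h (n + 1)
  rw [Function.iterate_succ_apply'] at hy
  have : σ^[n] (σ y) = σ^[n] b := by
    rw [← Function.iterate_succ_apply, Function.iterate_succ_apply', hy]
  exact hb y (hσ.iterate n this)

lemma iter_base_inj {σ : α → α} (hσ : Injective σ) {b : α} (hb : ∀ x, σ x ≠ b)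
    (hacyc : ∀ (x : α) (k : ℕ), σ^[k+1] x ≠ x) {n m : ℕ} (h : σ^[n] b = σ^[m] b) : n = m := by
  rcases lt_trichotomy n m with hlt | he | hlt
  · exfalso
    obtain ⟨k, hk⟩ : ∃ k, m = n + (k + 1) := ⟨m - n - 1, by omega⟩
    subst hk
    rw [add_comm, Function.iterate_add_apply] at h
    exact hacyc (σ^[n] b) k h.symm
  · exact he
  · exfalso
    obtain ⟨k, hk⟩ : ∃ k, n = m + (k + 1) := ⟨n - m - 1, by omega⟩
    subst hk
    rw [add_comm, Function.iterate_add_apply] at h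
    exact hacyc (σ^[m] b) k h

section Perm

variable (σ : α → α) (hσ : Injective σ)

/-- The permutation induced by `σ` on the set of infinitely divisible points. -/
noncomputable def infPerm : Equiv.Perm {x : α // IsInf σ x} := by
  apply Equiv.ofBijective (fun x => ⟨σ x.1, isInf_succ x.2⟩)
  constructor
  · intro x y hxy
    exact Subtype.ext (hσ (congrArg Subtype.val hxy))
  · rintro ⟨x, hx⟩
    obtain ⟨y, hy⟩ := hx 1
    simp only [Function.iterate_one] at hy
    exact ⟨⟨y, isInf_pred hσ (hy ▸ hx)⟩, Subtype.ext hy⟩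

lemma infPerm_apply (x : {x : α // IsInf σ x}) : ((infPerm σ hσ) x).1 = σ x.1 := rfl

lemma infPerm_pow_apply (n : ℕ) (x : {x : α // IsInf σ x}) :
    ((infPerm σ hσ ^ n) x).1 = σ^[n] x.1 := by
  induction n with
  | zero => rfl
  | succ k ih =>
      rw [pow_succ', Equiv.Perm.mul_apply, infPerm_apply, ih]
      exact (Function.iterate_succ_apply' σ k x.1).symm

lemma infPerm_free (hacyc : ∀ (x : α) (k : ℕ), σ^[k+1] x ≠ x)
    {z : ℤ} (hz : z ≠ 0) (x : {x : α // IsInf σ x}) : (infPerm σ hσ ^ z) x ≠ x := by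
  have key : ∀ (k : ℕ) (y : {x : α // IsInf σ x}), (infPerm σ hσ ^ ((k : ℤ) + 1)) y ≠ y := by
    intro k y hy
    have : ((k : ℤ) + 1) = ((k + 1 : ℕ) : ℤ) := by push_cast; ring
    rw [this, zpow_natCast] at hy
    exact hacyc y.1 k (by rw [← infPerm_pow_apply σ hσ, hy])
  intro hx
  rcases lt_trichotomy z 0 with h | h | h
  · obtain ⟨k, hk⟩ : ∃ k : ℕ, -z = (k : ℤ) + 1 := ⟨(-z - 1).toNat, by omega⟩
    have : (infPerm σ hσ ^ ((k : ℤ) + 1)) x = x := by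
      rw [← hk]
      have := congrArg (fun w => (infPerm σ hσ ^ (-z)) w) hx
      simpa [← zpow_add] using this.symm
    exact key k x this
  · exact hz h
  · obtain ⟨k, hk⟩ : ∃ k : ℕ, z = (k : ℤ) + 1 := ⟨(z - 1).toNat, by omega⟩
    exact key k x (hk ▸ hx)

end Perm

section Orbits

variable (σ : α → α) (hσ : Injective σ)

/-- Orbit equivalence under the permutation of infinite points. -/
noncomputable def orbSetoid : Setoid {x : α // IsInf σ x} where
  r x y := ∃ z : ℤ, (infPerm σ hσ ^ z) x = y
  iseqv := by
    constructor
    · exact fun x => ⟨0, rfl⟩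
    · rintro x y ⟨z, hz⟩
      exact ⟨-z, by rw [← hz]; simp [← zpow_add]⟩
    · rintro x y w ⟨z, hz⟩ ⟨z', hz'⟩
      exact ⟨z + z', by rw [add_comm, zpow_add, Equiv.Perm.mul_apply, hz, hz']⟩

/-- The offset of an infinite point from the chosen representative of its orbit. -/
noncomputable def offset (x : {x : α // IsInf σ x}) : ℤ :=
  Classical.choose (Quotient.exact (Quotient.out_eq (s := orbSetoid σ hσ) ⟦x⟧))

lemma offset_spec (x : {x : α // IsInf σ x}) :
    (infPerm σ hσ ^ offset σ hσ x) (Quotient.out (s := orbSetoid σ hσ) ⟦x⟧) = x :=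
  Classical.choose_spec (Quotient.exact (Quotient.out_eq (s := orbSetoid σ hσ) ⟦x⟧))

lemma offset_unique (hacyc : ∀ (x : α) (k : ℕ), σ^[k+1] x ≠ x)
    {z z' : ℤ} {r : {x : α // IsInf σ x}}
    (h : (infPerm σ hσ ^ z) r = (infPerm σ hσ ^ z') r) : z = z' := by
  by_contra hne
  have h2 : (infPerm σ hσ ^ (z - z')) ((infPerm σ hσ ^ z') r) = (infPerm σ hσ ^ z') r := by
    rw [← Equiv.Perm.mul_apply, ← zpow_add, sub_add_cancel, h]
  exact infPerm_free σ hσ hacyc (sub_ne_zero.mpr hne) _ h2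

lemma mk_orbQuot (hacyc : ∀ (x : α) (k : ℕ), σ^[k+1] x ≠ x)
    (hbig : ℵ₀ < #{x : α // IsInf σ x}) :
    #(Quotient (orbSetoid σ hσ)) = #{x : α // IsInf σ x} := by
  have le1 : #(Quotient (orbSetoid σ hσ)) ≤ #{x : α // IsInf σ x} := mk_quotient_le
  have le2 : #{x : α // IsInf σ x} ≤ #(Quotient (orbSetoid σ hσ)) * ℵ₀ := by
    have : #{x : α // IsInf σ x} ≤ #(Quotient (orbSetoid σ hσ) × ℤ) := by
      apply mk_le_of_injective (f := fun x => (⟦x⟧, offset σ hσ x))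
      intro x y hxy
      have h1 : (⟦x⟧ : Quotient (orbSetoid σ hσ)) = ⟦y⟧ := (Prod.ext_iff.mp hxy).1
      have h2 : offset σ hσ x = offset σ hσ y := (Prod.ext_iff.mp hxy).2
      have := offset_spec σ hσ x
      rw [h1, h2] at this
      rw [← this, offset_spec σ hσ y]
    simpa [mk_int] using this
  have hQbig : ℵ₀ ≤ #(Quotient (orbSetoid σ hσ)) := by
    by_contra hlt
    push_neg at hlt
    have : #{x : α // IsInf σ x} ≤ ℵ₀ :=
      le2.trans (by
        calc #(Quotient (orbSetoid σ hσ)) * ℵ₀ ≤ ℵ₀ * ℵ₀ :=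
              mul_le_mul_left hlt.le _
          _ = ℵ₀ := by simp)
    exact absurd this (not_le.mpr hbig)
  refine le_antisymm le1 ?_
  calc #{x : α // IsInf σ x} ≤ #(Quotient (orbSetoid σ hσ)) * ℵ₀ := le2
    _ = #(Quotient (orbSetoid σ hσ)) ⊔ ℵ₀ := mul_eq_max hQbig le_rfl
    _ = #(Quotient (orbSetoid σ hσ)) := sup_eq_left.mpr hQbig

end Orbits

universe u

/-- Main abstract lemma: two injective acyclic unary algebras with a single base point,
every element either infinitely divisible or reachable from the base, and equinumerous
(uncountable) sets of infinitely divisible points, are isomorphic. -/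
theorem exists_iso {α β : Type u} (σ : α → α) (τ : β → β) (b : α) (c : β)
    (hσ : Injective σ) (hτ : Injective τ)
    (haσ : ∀ (x : α) (k : ℕ), σ^[k+1] x ≠ x) (haτ : ∀ (y : β) (k : ℕ), τ^[k+1] y ≠ y)
    (hbσ : ∀ x, σ x ≠ b) (hbτ : ∀ y, τ y ≠ c)
    (htσ : ∀ x, IsInf σ x ∨ ∃ n, x = σ^[n] b)
    (htτ : ∀ y, IsInf τ y ∨ ∃ n, y = τ^[n] c)
    (hcard : #{x : α // IsInf σ x} = #{y : β // IsInf τ y})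
    (hbig : ℵ₀ < #{x : α // IsInf σ x}) :
    ∃ h : α → β, Bijective h ∧ ∀ x, h (σ x) = τ (h x) := by
  classical
  -- orbit quotient equivalence
  have hbig' : ℵ₀ < #{y : β // IsInf τ y} := hcard ▸ hbig
  have hQ : #(Quotient (orbSetoid σ hσ)) = #(Quotient (orbSetoid τ hτ)) := by
    rw [mk_orbQuot σ hσ haσ hbig, mk_orbQuot τ hτ haτ hbig', hcard]
  obtain ⟨q⟩ := Cardinal.eq.mp hQ
  set e := infPerm σ hσ with he
  set e' := infPerm τ hτ with he'
  set rep : Quotient (orbSetoid σ hσ) → {x : α // IsInf σ x} := Quotient.out with hrep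
  set rep' : Quotient (orbSetoid τ hτ) → {y : β // IsInf τ y} := Quotient.out with hrep'
  -- the map on the infinite part
  set H : {x : α // IsInf σ x} → {y : β // IsInf τ y} :=
    fun x => (e' ^ offset σ hσ x) (rep' (q ⟦x⟧)) with hH
  have classH : ∀ x, (⟦H x⟧ : Quotient (orbSetoid τ hτ)) = q ⟦x⟧ := by
    intro x
    have : (orbSetoid τ hτ).r (rep' (q ⟦x⟧)) (H x) := ⟨offset σ hσ x, rfl⟩
    have h2 := Quotient.sound (s := orbSetoid τ hτ) this
    rw [← h2, Quotient.out_eq]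
  have offH : ∀ x, offset τ hτ (H x) = offset σ hσ x := by
    intro x
    apply offset_unique τ hτ haτ (r := rep' (q ⟦x⟧))
    have := offset_spec τ hτ (H x)
    rw [classH x] at this
    exact this
  have Hinj : Injective H := by
    intro x y hxy
    have hcl : q ⟦x⟧ = q ⟦y⟧ := by rw [← classH x, ← classH y, hxy]
    have hcl2 : (⟦x⟧ : Quotient (orbSetoid σ hσ)) = ⟦y⟧ := q.injective hcl
    have hoff : offset σ hσ x = offset σ hσ y := by
      rw [← offH x, ← offH y, hxy]
    have hx := offset_spec σ hσ x
    have hy := offset_spec σ hσ y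
    rw [← hx, ← hy, hcl2, hoff]
  have Hsurj : Surjective H := by
    intro y
    set x := (e ^ offset τ hτ y) (rep (q.symm ⟦y⟧)) with hx
    have hclx : (⟦x⟧ : Quotient (orbSetoid σ hσ)) = q.symm ⟦y⟧ := by
      have : (orbSetoid σ hσ).r (rep (q.symm ⟦y⟧)) x := ⟨offset τ hτ y, rfl⟩
      have h2 := Quotient.sound (s := orbSetoid σ hσ) this
      rw [← h2, Quotient.out_eq]
    have hoffx : offset σ hσ x = offset τ hτ y := by
      apply offset_unique σ hσ haσ (r := rep (q.symm ⟦y⟧))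
      have := offset_spec σ hσ x
      rw [hclx] at this
      exact this
    refine ⟨x, ?_⟩
    rw [hH]
    simp only [hoffx, hclx, Equiv.apply_symm_apply]
    exact offset_spec τ hτ y
  have Hequiv : ∀ x, H (e x) = e' (H x) := by
    intro x
    have hclex : (⟦e x⟧ : Quotient (orbSetoid σ hσ)) = ⟦x⟧ := by
      have : (orbSetoid σ hσ).r x (e x) := ⟨1, by simp [he]⟩
      exact (Quotient.sound (s := orbSetoid σ hσ) this).symm
    have hoffe : offset σ hσ (e x) = offset σ hσ x + 1 := by
      apply offset_unique σ hσ haσ (r := rep ⟦e x⟧)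
      rw [offset_spec σ hσ (e x), hclex]
      rw [add_comm, zpow_add, Equiv.Perm.mul_apply, zpow_one]
      rw [offset_spec σ hσ x]
    rw [hH]
    simp only [hclex, hoffe]
    rw [add_comm, zpow_add, Equiv.Perm.mul_apply, zpow_one]
  -- assemble the full map
  set h : α → β := fun x =>
    if hx : IsInf σ x then (H ⟨x, hx⟩).1
    else τ^[Classical.choose ((htσ x).resolve_left hx)] c with hdef
  have hInfval : ∀ (x : α) (hx : IsInf σ x), h x = (H ⟨x, hx⟩).1 := by
    intro x hx; rw [hdef]; simp [hx]
  have hBaseval : ∀ (n : ℕ), h (σ^[n] b) = τ^[n] c := by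
    intro n
    have hni : ¬ IsInf σ (σ^[n] b) := notInf_iter hσ hbσ n
    rw [hdef]
    simp only [hni, dif_neg, not_false_iff]
    congr 1
    have hspec := Classical.choose_spec ((htσ (σ^[n] b)).resolve_left hni)
    exact iter_base_inj hσ hbσ haσ hspec.symm
  refine ⟨h, ⟨?_, ?_⟩, ?_⟩
  · -- injective
    intro x y hxy
    by_cases hx : IsInf σ x <;> by_cases hy : IsInf σ y
    · rw [hInfval x hx, hInfval y hy] at hxy
      have h2 : (⟨x, hx⟩ : {x : α // IsInf σ x}) = ⟨y, hy⟩ := Hinj (Subtype.ext hxy)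
      exact congrArg Subtype.val h2
    · exfalso
      obtain ⟨n, hn⟩ := (htσ y).resolve_left hy
      rw [hInfval x hx, hn, hBaseval n] at hxy
      exact notInf_iter hτ hbτ n (hxy ▸ (H ⟨x, hx⟩).2)
    · exfalso
      obtain ⟨n, hn⟩ := (htσ x).resolve_left hx
      rw [hInfval y hy, hn, hBaseval n] at hxy
      exact notInf_iter hτ hbτ n (hxy.symm ▸ (H ⟨y, hy⟩).2)
    · obtain ⟨n, hn⟩ := (htσ x).resolve_left hx
      obtain ⟨m, hm⟩ := (htσ y).resolve_left hy
      rw [hn, hm, hBaseval n, hBaseval m] at hxy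
      rw [hn, hm, iter_base_inj hτ hbτ haτ hxy]
  · -- surjective
    intro y
    by_cases hy : IsInf τ y
    · obtain ⟨x, hxeq⟩ := Hsurj ⟨y, hy⟩
      exact ⟨x.1, by rw [hInfval x.1 x.2, Subtype.coe_eta, hxeq]⟩
    · obtain ⟨n, hn⟩ := (htτ y).resolve_left hy
      exact ⟨σ^[n] b, by rw [hBaseval n, hn]⟩
  · -- equivariance
    intro x
    by_cases hx : IsInf σ x
    · have hsx : IsInf σ (σ x) := isInf_succ hx
      rw [hInfval x hx, hInfval (σ x) hsx]
      have : (⟨σ x, hsx⟩ : {x : α // IsInf σ x}) = e ⟨x, hx⟩ := rfl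
      rw [this, Hequiv]
      rfl
    · obtain ⟨n, hn⟩ := (htσ x).resolve_left hx
      have h1 : σ (σ^[n] b) = σ^[n+1] b := (Function.iterate_succ_apply' σ n b).symm
      rw [hn, h1, hBaseval (n+1), hBaseval n, Function.iterate_succ_apply']

end MonoUnary

namespace GermSide
open Filter Cardinal Function MonoUnary

abbrev Idx : Type := Finset (Set ℕ)

def ihat (A : Set ℕ) : Set Idx := {s | A ∈ s}

instance genNeBot : (Filter.generate (Set.range ihat)).NeBot := by
  rw [Filter.generate_neBot_iff]
  intro t hsub hfin
  classical
  set g : Set Idx → Set ℕ := fun u => if h : ∃ A, ihat A = u then Classical.choose h else ∅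
    with hg
  refine ⟨(hfin.image g).toFinset, ?_⟩
  intro u hu
  obtain ⟨A, hA⟩ := hsub hu
  have hgu : ihat (g u) = u := by
    rw [hg]
    simp only
    rw [dif_pos ⟨A, hA⟩]
    exact Classical.choose_spec (⟨A, hA⟩ : ∃ A, ihat A = u)
  have : g u ∈ (hfin.image g).toFinset := by
    rw [Set.Finite.mem_toFinset]
    exact ⟨u, hu, rfl⟩
  rw [← hgu]
  exact this

noncomputable def D : Ultrafilter Idx := Ultrafilter.of (Filter.generate (Set.range ihat))

lemma ihat_mem (A : Set ℕ) : ihat A ∈ D :=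
  Ultrafilter.of_le _ (Filter.mem_generate_of_mem ⟨A, rfl⟩)

lemma injective_Iio : Function.Injective (fun i : ℕ => ({m : ℕ | m < i} : Set ℕ)) := by
  intro i j h
  simp only [Set.ext_iff, Set.mem_setOf_eq] at h
  have h1 := h i
  have h2 := h j
  omega

lemma card_mem (k : ℕ) : {s : Idx | k ≤ s.card} ∈ D := by
  classical
  have hmem : (⋂ i ∈ Finset.range k, ihat {m : ℕ | m < i}) ∈ D := by
    refine (Filter.biInter_mem (Finset.range k).finite_toSet).mpr ?_
    intro i _
    exact ihat_mem _
  refine Filter.mem_of_superset hmem ?_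
  intro s hs
  simp only [Set.mem_iInter] at hs
  have hsub : (Finset.range k).image (fun i => ({m : ℕ | m < i} : Set ℕ)) ⊆ s := by
    intro A hA
    obtain ⟨i, hi, rfl⟩ := Finset.mem_image.mp hA
    exact hs i hi
  have hcard : ((Finset.range k).image (fun i => ({m : ℕ | m < i} : Set ℕ))).card = k := by
    rw [Finset.card_image_of_injective _ injective_Iio, Finset.card_range]
  calc k = _ := hcard.symm
    _ ≤ s.card := Finset.card_le_card hsub

/-- The successor map on germs. -/
noncomputable def sg : (D : Filter Idx).Germ ℕ → (D : Filter Idx).Germ ℕ :=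
  Filter.Germ.map (fun n => n + 1)

lemma sg_coe (f : Idx → ℕ) : sg ↑f = ↑(fun i => f i + 1) := Filter.Germ.map_coe _ f

lemma sg_iter (f : Idx → ℕ) (n : ℕ) : sg^[n] ↑f = (↑(fun i => f i + n) : (D : Filter Idx).Germ ℕ) := by
  induction n with
  | zero => simp
  | succ k ih =>
      rw [Function.iterate_succ_apply', ih, sg_coe]
      apply congrArg
      funext i
      omega

lemma sg_inj : Function.Injective sg := by
  intro f g
  refine Filter.Germ.inductionOn f (fun f => Filter.Germ.inductionOn g (fun g h => ?_))
  rw [sg_coe, sg_coe, Filter.Germ.coe_eq] at h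
  rw [Filter.Germ.coe_eq]
  filter_upwards [h] with i hi
  omega

lemma sg_acyc : ∀ (x : (D : Filter Idx).Germ ℕ) (k : ℕ), sg^[k+1] x ≠ x := by
  intro x k
  refine Filter.Germ.inductionOn x (fun f h => ?_)
  rw [sg_iter, Filter.Germ.coe_eq] at h
  obtain ⟨i, hi⟩ := h.exists
  have hi' : f i + (k + 1) = f i := hi
  omega

lemma sg_base : ∀ x, sg x ≠ (↑(fun _ : Idx => 0) : (D : Filter Idx).Germ ℕ) := by
  intro x
  refine Filter.Germ.inductionOn x (fun f h => ?_)
  rw [sg_coe, Filter.Germ.coe_eq] at h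
  obtain ⟨i, hi⟩ := h.exists
  have hi' : f i + 1 = 0 := hi
  omega

lemma inf_of_unbounded (f : Idx → ℕ) (h : ∀ k, {i : Idx | k ≤ f i} ∈ D) :
    IsInf sg (↑f : (D : Filter Idx).Germ ℕ) := by
  intro k
  refine ⟨↑(fun i => f i - k), ?_⟩
  rw [sg_iter, Filter.Germ.coe_eq]
  filter_upwards [h k] with i hi
  omega

lemma sg_tricho : ∀ x : (D : Filter Idx).Germ ℕ,
    IsInf sg x ∨ ∃ n, x = sg^[n] (↑(fun _ : Idx => 0) : (D : Filter Idx).Germ ℕ) := by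
  intro x
  refine Filter.Germ.inductionOn x (fun f => ?_)
  by_cases h : ∃ n, {i : Idx | f i = n} ∈ D
  · obtain ⟨n, hn⟩ := h
    right
    refine ⟨n, ?_⟩
    rw [sg_iter, Filter.Germ.coe_eq]
    filter_upwards [hn] with i hi
    omega
  · left
    push_neg at h
    apply inf_of_unbounded
    intro k
    induction k with
    | zero =>
        have he : {i : Idx | 0 ≤ f i} = Set.univ := by ext i; simp
        rw [he]
        exact Filter.univ_mem
    | succ m ih =>
        have h1 : {i : Idx | m ≤ f i} = {i : Idx | m + 1 ≤ f i} ∪ {i : Idx | f i = m} := by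
          ext i; simp only [Set.mem_setOf_eq, Set.mem_union]; omega
        rw [h1] at ih
        rcases (Ultrafilter.union_mem_iff).mp ih with h2 | h2
        · exact h2
        · exact absurd h2 (h m)

open scoped Classical in
/-- Encoding of the trace of `T` on the index `s`, guaranteeing `≥ s.card`. -/
noncomputable def enc (T : Set (Set ℕ)) (s : Idx) : ℕ :=
  Nat.pair s.card
    (Encodable.encode ((s.filter (fun A => A ∈ T)).image (fun A => s.toList.idxOf A)))

lemma enc_ne {T T' : Set (Set ℕ)} {A₀ : Set ℕ} (h₀ : A₀ ∈ T) (h₀' : A₀ ∉ T')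
    {s : Idx} (hs : A₀ ∈ s) : enc T s ≠ enc T' s := by
  classical
  intro h
  have h2 := (Nat.pair_eq_pair.mp h).2
  have h3 := Encodable.encode_injective h2
  have hmem : s.toList.idxOf A₀ ∈
      (s.filter (fun A => A ∈ T)).image (fun A => s.toList.idxOf A) :=
    Finset.mem_image.mpr ⟨A₀, Finset.mem_filter.mpr ⟨hs, h₀⟩, rfl⟩
  rw [h3] at hmem
  obtain ⟨A, hA, hAeq⟩ := Finset.mem_image.mp hmem
  have hAs : A ∈ s := (Finset.mem_filter.mp hA).1
  have hAT' : A ∈ T' := (Finset.mem_filter.mp hA).2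
  have hAeq' : A = A₀ :=
    (List.idxOf_inj (Finset.mem_toList.mpr hAs)).mp hAeq
  exact h₀' (hAeq' ▸ hAT')

lemma enc_inf (T : Set (Set ℕ)) : IsInf sg (↑(enc T) : (D : Filter Idx).Germ ℕ) := by
  apply inf_of_unbounded
  intro k
  refine Filter.mem_of_superset (card_mem k) ?_
  intro s hs
  exact le_trans hs (Nat.left_le_pair _ _)

lemma enc_germ_ne {T T' : Set (Set ℕ)} (h : T ≠ T') :
    (↑(enc T) : (D : Filter Idx).Germ ℕ) ≠ ↑(enc T') := by
  have key : ∀ (U U' : Set (Set ℕ)) (A₀ : Set ℕ), A₀ ∈ U → A₀ ∉ U' →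
      (↑(enc U) : (D : Filter Idx).Germ ℕ) ≠ ↑(enc U') := by
    intro U U' A₀ hU hU' heq
    rw [Filter.Germ.coe_eq] at heq
    have h2 : {s : Idx | enc U s = enc U' s} ∩ ihat A₀ ∈ D :=
      Filter.inter_mem heq (ihat_mem A₀)
    obtain ⟨s, hs1, hs2⟩ := Filter.nonempty_of_mem h2
    exact enc_ne hU hU' hs2 hs1
  by_cases hc : ∃ A₀, A₀ ∈ T ∧ A₀ ∉ T'
  · obtain ⟨A₀, h1, h2⟩ := hc
    exact key T T' A₀ h1 h2
  · push_neg at hc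
    have hex : ∃ A₀, A₀ ∈ T' ∧ A₀ ∉ T := by
      by_contra hn
      push_neg at hn
      exact h (Set.Subset.antisymm hc hn)
    obtain ⟨A₀, h1, h2⟩ := hex
    exact fun he => key T' T A₀ h1 h2 he.symm

lemma germ_inf_card : #{x : (D : Filter Idx).Germ ℕ // IsInf sg x} = (2 : Cardinal) ^ ((2 : Cardinal) ^ ℵ₀) := by
  apply le_antisymm
  · have h1 : #{x : (D : Filter Idx).Germ ℕ // IsInf sg x} ≤ #((D : Filter Idx).Germ ℕ) :=
      mk_le_of_injective (f := Subtype.val) Subtype.val_injective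
    have h2 : #((D : Filter Idx).Germ ℕ) ≤ #(Idx → ℕ) := by
      apply mk_le_of_surjective (f := fun f : Idx → ℕ => (↑f : (D : Filter Idx).Germ ℕ))
      intro x
      exact Filter.Germ.inductionOn x (fun f => ⟨f, rfl⟩)
    have h3 : #(Idx → ℕ) = (ℵ₀ : Cardinal) ^ ((2 : Cardinal) ^ ℵ₀) := by
      rw [← Cardinal.power_def, mk_nat, mk_finset_of_infinite, Cardinal.mk_set, mk_nat]
    have h4 : (ℵ₀ : Cardinal) ^ ((2:Cardinal) ^ ℵ₀) ≤ (2:Cardinal) ^ ((2:Cardinal) ^ ℵ₀) := by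
      calc (ℵ₀ : Cardinal) ^ ((2:Cardinal) ^ ℵ₀)
          ≤ ((2:Cardinal) ^ ℵ₀) ^ ((2:Cardinal) ^ ℵ₀) :=
            power_le_power_right (cantor ℵ₀).le
        _ = (2:Cardinal) ^ (ℵ₀ * (2 ^ ℵ₀)) := (power_mul).symm
        _ = (2:Cardinal) ^ ((2:Cardinal) ^ ℵ₀) := by
            congr 1
            rw [mul_eq_max le_rfl (cantor ℵ₀).le]
            exact sup_eq_right.mpr (cantor ℵ₀).le
    exact le_trans (le_trans h1 (le_trans h2 h3.le)) h4
  · have hinj : Function.Injective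
        (fun T : Set (Set ℕ) => (⟨↑(enc T), enc_inf T⟩ :
          {x : (D : Filter Idx).Germ ℕ // IsInf sg x})) := by
      intro T T' h
      by_contra hne
      exact enc_germ_ne hne (congrArg Subtype.val h)
    have := mk_le_of_injective hinj
    rwa [Cardinal.mk_set, Cardinal.mk_set, mk_nat] at this

end GermSide

namespace UfSide
open Filter Cardinal Function MonoUnary

/-- The successor map on ultrafilters. -/
noncomputable def tau : Ultrafilter ℕ → Ultrafilter ℕ := Ultrafilter.map (fun n => n + 1)

lemma tau_iter (u : Ultrafilter ℕ) (k : ℕ) : tau^[k] u = Ultrafilter.map (fun n => n + k) u := by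
  induction k with
  | zero =>
      apply Ultrafilter.coe_injective
      rw [Function.iterate_zero_apply, Ultrafilter.coe_map]
      have : (fun n : ℕ => n + 0) = id := by funext n; simp
      rw [this, Filter.map_id]
  | succ m ih =>
      apply Ultrafilter.coe_injective
      rw [Function.iterate_succ_apply', ih]
      show (Ultrafilter.map (fun n => n + 1) (Ultrafilter.map (fun n => n + m) u) : Filter ℕ) = _
      rw [Ultrafilter.coe_map, Ultrafilter.coe_map, Ultrafilter.coe_map, Filter.map_map]
      congr 1

lemma tau_inj : Function.Injective tau := by
  intro u v h
  apply Ultrafilter.ext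
  intro X
  have hinj : Function.Injective (fun n : ℕ => n + 1) := add_left_injective 1
  have key : ∀ w : Ultrafilter ℕ, X ∈ w ↔ ((fun n : ℕ => n + 1) '' X) ∈ tau w := by
    intro w
    rw [tau, Ultrafilter.mem_map, Set.preimage_image_eq X hinj]
  rw [key u, key v, h]

lemma tau_acyc : ∀ (u : Ultrafilter ℕ) (k : ℕ), tau^[k+1] u ≠ u := by
  intro u k h
  rw [tau_iter] at h
  set m := k + 1 with hm
  set X : Set ℕ := {n | n / m % 2 = 0} with hX
  have hpre : (fun n : ℕ => n + m) ⁻¹' X = Xᶜ := by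
    ext n
    simp only [hX, Set.mem_preimage, Set.mem_setOf_eq, Set.mem_compl_iff]
    rw [Nat.add_div_right n (by omega : 0 < m)]
    omega
  have h1 : X ∈ u ↔ Xᶜ ∈ u := by
    conv_lhs => rw [← h]
    rw [Ultrafilter.mem_map, hpre]
  rcases em (X ∈ u) with hx | hx
  · exact absurd (h1.mp hx) (by rwa [Ultrafilter.compl_mem_iff_notMem, not_not])
  · exact hx (h1.mpr (Ultrafilter.compl_mem_iff_notMem.mpr hx))

lemma tau_base : ∀ u, tau u ≠ (pure 0 : Ultrafilter ℕ) := by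
  intro u h
  have h0 : ({0} : Set ℕ) ∈ (pure 0 : Ultrafilter ℕ) := Ultrafilter.mem_pure.mpr rfl
  rw [← h, tau, Ultrafilter.mem_map] at h0
  have he : (fun n : ℕ => n + 1) ⁻¹' {0} = ∅ := by
    ext n; simp
  rw [he] at h0
  exact Filter.empty_notMem _ h0

lemma eq_pure_of_singleton_mem {u : Ultrafilter ℕ} {n : ℕ} (h : {n} ∈ u) : u = pure n := by
  rw [← Ultrafilter.coe_le_coe, Ultrafilter.coe_pure]
  exact Filter.le_pure_iff.mpr h

lemma tau_tricho : ∀ u : Ultrafilter ℕ, IsInf tau u ∨ ∃ n, u = tau^[n] (pure 0 : Ultrafilter ℕ) := by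
  intro u
  by_cases hp : ∃ n : ℕ, u = pure n
  · obtain ⟨n, hn⟩ := hp
    right
    refine ⟨n, ?_⟩
    rw [tau_iter, hn]
    apply Ultrafilter.coe_injective
    rw [Ultrafilter.coe_map, Ultrafilter.coe_pure, Ultrafilter.coe_pure, Filter.map_pure]
    norm_num
  · left
    push_neg at hp
    have hub : ∀ k, {m : ℕ | k ≤ m} ∈ u := by
      intro k
      induction k with
      | zero =>
          have : {m : ℕ | 0 ≤ m} = Set.univ := by ext m; simp
          rw [this]; exact Filter.univ_mem
      | succ j ih =>
          have hj : ({j} : Set ℕ)ᶜ ∈ u := by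
            rw [Ultrafilter.compl_mem_iff_notMem]
            intro hmem
            exact hp j (eq_pure_of_singleton_mem hmem)
          have := Filter.inter_mem ih hj
          refine Filter.mem_of_superset this ?_
          intro m hm
          simp only [Set.mem_inter_iff, Set.mem_setOf_eq, Set.mem_compl_iff,
            Set.mem_singleton_iff] at hm
          simp only [Set.mem_setOf_eq]
          omega
    intro k
    refine ⟨Ultrafilter.map (fun n => n - k) u, ?_⟩
    rw [tau_iter]
    apply Ultrafilter.coe_injective
    rw [Ultrafilter.coe_map, Ultrafilter.coe_map, Filter.map_map]
    have : ((fun n : ℕ => n + k) ∘ (fun n : ℕ => n - k)) =ᶠ[(u : Filter ℕ)] id := by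
      refine Filter.mem_of_superset (hub k) ?_
      intro m hm
      simp only [Set.mem_setOf_eq] at hm ⊢
      show m - k + k = m
      omega
    rw [Filter.map_congr this, Filter.map_id]

lemma notInf_iff_pure (u : Ultrafilter ℕ) : ¬ IsInf tau u ↔ ∃ n, u = pure n := by
  constructor
  · intro h
    obtain ⟨n, hn⟩ := (tau_tricho u).resolve_left h
    refine ⟨n, ?_⟩
    rw [hn, tau_iter]
    apply Ultrafilter.coe_injective
    rw [Ultrafilter.coe_map, Ultrafilter.coe_pure, Ultrafilter.coe_pure, Filter.map_pure]
    norm_num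
  · rintro ⟨n, rfl⟩ h
    have := notInf_iter tau_inj tau_base n
    rw [tau_iter] at this
    apply this
    have he : Ultrafilter.map (fun m => m + n) (pure 0 : Ultrafilter ℕ) = pure n := by
      apply Ultrafilter.coe_injective
      rw [Ultrafilter.coe_map, Ultrafilter.coe_pure, Ultrafilter.coe_pure, Filter.map_pure]
      norm_num
    rwa [he]

/-! ### 2^𝔠 ultrafilters on ℕ -/

abbrev C : Type := Finset ℕ × Finset (Finset ℕ)

/-- The basic independent family. -/
def AX (X : Set ℕ) : Set C := {p | ∃ G ∈ p.2, ∀ n : ℕ, n ∈ G ↔ (n ∈ p.1 ∧ n ∈ X)}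

open scoped Classical in
/-- The family of sets/complements selected by `T`. -/
noncomputable def gfam (T : Set (Set ℕ)) (X : Set ℕ) : Set C :=
  if X ∈ T then AX X else (AX X)ᶜ

open scoped Classical in
/-- A classical choice of a point in the symmetric difference. -/
noncomputable def sep (X Y : Set ℕ) : ℕ :=
  if h : ∃ n, ¬(n ∈ X ↔ n ∈ Y) then Classical.choose h else 0

lemma sep_spec {X Y : Set ℕ} (h : X ≠ Y) : ¬(sep X Y ∈ X ↔ sep X Y ∈ Y) := by
  have hex : ∃ n, ¬(n ∈ X ↔ n ∈ Y) := by
    by_contra hn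
    push_neg at hn
    exact h (Set.ext hn)
  rw [sep, dif_pos hex]
  exact Classical.choose_spec hex

lemma gfam_neBot (T : Set (Set ℕ)) : (Filter.generate (Set.range (gfam T))).NeBot := by
  rw [Filter.generate_neBot_iff]
  intro t hsub hfin
  classical
  -- choose, for each member of `t`, a set `X` generating it
  set g : Set C → Set ℕ := fun u => if h : ∃ X, gfam T X = u then Classical.choose h else ∅
    with hg
  have hgu : ∀ u ∈ t, gfam T (g u) = u := by
    intro u hu
    obtain ⟨X, hX⟩ := hsub hu
    rw [hg]
    simp only
    rw [dif_pos ⟨X, hX⟩]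
    exact Classical.choose_spec (⟨X, hX⟩ : ∃ X, gfam T X = u)
  set s : Set (Set ℕ) := g '' t with hs
  have hsfin : s.Finite := hfin.image g
  -- separating finite set
  set F : Finset ℕ := ((hsfin.prod hsfin).image (fun p => sep p.1 p.2)).toFinset with hF
  have hFmem : ∀ X ∈ s, ∀ Y ∈ s, sep X Y ∈ F := by
    intro X hX Y hY
    rw [hF, Set.Finite.mem_toFinset]
    exact ⟨(X, Y), ⟨hX, hY⟩, rfl⟩
  -- the family of traces
  set Fam : Finset (Finset ℕ) :=
    ((hsfin.inter_of_left T).image (fun X => F.filter (fun n => n ∈ X))).toFinset with hFam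
  refine ⟨(F, Fam), ?_⟩
  intro u hu
  rw [← hgu u hu]
  set X := g u with hXdef
  have hXs : X ∈ s := ⟨u, hu, rfl⟩
  rw [gfam]
  by_cases hXT : X ∈ T
  · rw [if_pos hXT]
    refine ⟨F.filter (fun n => n ∈ X), ?_, ?_⟩
    · rw [hFam, Set.Finite.mem_toFinset]
      exact ⟨X, ⟨hXs, hXT⟩, rfl⟩
    · intro n
      simp [Finset.mem_filter]
  · rw [if_neg hXT]
    intro hmem
    obtain ⟨G, hG, hGprop⟩ := hmem
    rw [hFam, Set.Finite.mem_toFinset] at hG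
    obtain ⟨Y, ⟨hYs, hYT⟩, hYeq⟩ := hG
    have hXY : Y ≠ X := fun h => hXT (h ▸ hYT)
    have h0 := hGprop (sep Y X)
    rw [← hYeq] at h0
    simp only [Finset.mem_filter] at h0
    have hsF : sep Y X ∈ F := hFmem Y hYs X hXs
    have : sep Y X ∈ Y ↔ sep Y X ∈ X := by
      constructor
      · intro hy; exact (h0.mp ⟨hsF, hy⟩).2
      · intro hx; exact (h0.mpr ⟨hsF, hx⟩).2
    exact sep_spec hXY this

/-- The ultrafilter on `C` selected by `T`. -/
noncomputable def uC (T : Set (Set ℕ)) : Ultrafilter C :=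
  haveI := gfam_neBot T
  Ultrafilter.of (Filter.generate (Set.range (gfam T)))

lemma gfam_mem_uC (T : Set (Set ℕ)) (X : Set ℕ) : gfam T X ∈ uC T := by
  haveI := gfam_neBot T
  exact Ultrafilter.of_le _ (Filter.mem_generate_of_mem ⟨X, rfl⟩)

noncomputable def ecC : C ≃ ℕ := Denumerable.eqv C

noncomputable def uT (T : Set (Set ℕ)) : Ultrafilter ℕ := Ultrafilter.map ecC (uC T)

lemma map_equiv_inj {γ δ : Type*} (e : γ ≃ δ) : Function.Injective (Ultrafilter.map e) := by
  intro u v h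
  apply Ultrafilter.coe_injective
  have h1 : ∀ w : Ultrafilter γ, Filter.map (⇑e.symm) (Filter.map (⇑e) (w : Filter γ)) = w := by
    intro w
    rw [Filter.map_map, Equiv.symm_comp_self, Filter.map_id]
  have h2 : Filter.map (⇑e) (u : Filter γ) = Filter.map (⇑e) (v : Filter γ) := by
    rw [← Ultrafilter.coe_map, ← Ultrafilter.coe_map, h]
  calc (u : Filter γ) = Filter.map (⇑e.symm) (Filter.map (⇑e) (u : Filter γ)) := (h1 u).symm
    _ = Filter.map (⇑e.symm) (Filter.map (⇑e) (v : Filter γ)) := by rw [h2]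
    _ = v := h1 v

lemma uT_inj : Function.Injective uT := by
  have key : ∀ T T' : Set (Set ℕ), ∀ X, X ∈ T → X ∉ T' → uC T ≠ uC T' := by
    intro T T' X h1 h2 h
    have hA : AX X ∈ uC T := by
      have := gfam_mem_uC T X
      rwa [gfam, if_pos h1] at this
    have hAc : (AX X)ᶜ ∈ uC T' := by
      have := gfam_mem_uC T' X
      rwa [gfam, if_neg h2] at this
    rw [h] at hA
    rw [Ultrafilter.compl_mem_iff_notMem] at hAc
    exact hAc hA
  intro T T' h
  by_contra hne
  have huC : uC T = uC T' := map_equiv_inj ecC h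
  by_cases hc : ∃ X, X ∈ T ∧ X ∉ T'
  · obtain ⟨X, h1, h2⟩ := hc
    exact key T T' X h1 h2 huC
  · push_neg at hc
    have hex : ∃ X, X ∈ T' ∧ X ∉ T := by
      by_contra hn
      push_neg at hn
      exact hne (Set.Subset.antisymm hc hn)
    obtain ⟨X, h1, h2⟩ := hex
    exact key T' T X h1 h2 huC.symm

lemma mk_ultrafilter_nat : #(Ultrafilter ℕ) = (2 : Cardinal) ^ ((2 : Cardinal) ^ ℵ₀) := by
  apply le_antisymm
  · have : Function.Injective (fun u : Ultrafilter ℕ => {X : Set ℕ | X ∈ u}) := by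
      intro u v h
      apply Ultrafilter.ext
      intro X
      exact ⟨fun hX => (Set.ext_iff.mp h X).mp hX, fun hX => (Set.ext_iff.mp h X).mpr hX⟩
    have := mk_le_of_injective this
    rwa [Cardinal.mk_set, Cardinal.mk_set, mk_nat] at this
  · have := mk_le_of_injective uT_inj
    rwa [Cardinal.mk_set, Cardinal.mk_set, mk_nat] at this

lemma aleph0_lt_big : ℵ₀ < (2 : Cardinal) ^ ((2 : Cardinal) ^ ℵ₀) :=
  (cantor ℵ₀).trans_le (power_le_power_left two_ne_zero (cantor ℵ₀).le)

lemma uf_inf_card : #{u : Ultrafilter ℕ // IsInf tau u} = (2 : Cardinal) ^ ((2 : Cardinal) ^ ℵ₀) := by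
  apply le_antisymm
  · have h1 : #{u : Ultrafilter ℕ // IsInf tau u} ≤ #(Ultrafilter ℕ) :=
      mk_le_of_injective (f := Subtype.val) Subtype.val_injective
    rwa [mk_ultrafilter_nat] at h1
  · classical
    set J : Ultrafilter ℕ → {u : Ultrafilter ℕ // IsInf tau u} ⊕ ℕ := fun u =>
      if h : IsInf tau u then Sum.inl ⟨u, h⟩
      else Sum.inr (Classical.choose ((notInf_iff_pure u).mp h)) with hJ
    have hJinj : Function.Injective J := by
      intro u v huv
      by_cases hu : IsInf tau u <;> by_cases hv : IsInf tau v
      · rw [hJ] at huv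
        simp only [dif_pos hu, dif_pos hv, Sum.inl.injEq] at huv
        exact congrArg Subtype.val huv
      · rw [hJ] at huv
        simp only [dif_pos hu, dif_neg hv] at huv
        exact absurd huv (by simp)
      · rw [hJ] at huv
        simp only [dif_neg hu, dif_pos hv] at huv
        exact absurd huv (by simp)
      · rw [hJ] at huv
        simp only [dif_neg hu, dif_neg hv, Sum.inr.injEq] at huv
        have hu2 := Classical.choose_spec ((notInf_iff_pure u).mp hu)
        have hv2 := Classical.choose_spec ((notInf_iff_pure v).mp hv)
        rw [hu2, hv2, huv]
    have hle := mk_le_of_injective hJinj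
    rw [Cardinal.mk_sum, Cardinal.lift_id, Cardinal.lift_id, mk_nat, mk_ultrafilter_nat] at hle
    have hω : ℵ₀ ≤ #{u : Ultrafilter ℕ // IsInf tau u} := by
      by_contra hlt
      push_neg at hlt
      have h2 : (2 : Cardinal) ^ ((2 : Cardinal) ^ ℵ₀) ≤ ℵ₀ := by
        calc (2 : Cardinal) ^ ((2 : Cardinal) ^ ℵ₀)
            ≤ #{u : Ultrafilter ℕ // IsInf tau u} + ℵ₀ := hle
          _ ≤ ℵ₀ + ℵ₀ := add_le_add hlt.le le_rfl
          _ = ℵ₀ := Cardinal.aleph0_add_aleph0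
      exact absurd h2 (not_le.mpr aleph0_lt_big)
    rwa [Cardinal.add_eq_left hω hω] at hle

end UfSide

lemma liftRel_iff (f g : (GermSide.D : Filter GermSide.Idx).Germ ℕ) :
    Filter.Germ.LiftRel Srel f g ↔ g = GermSide.sg f := by
  refine Filter.Germ.inductionOn₂ f g (fun f g => ?_)
  rw [Filter.Germ.liftRel_coe, GermSide.sg_coe, Filter.Germ.coe_eq]
  constructor
  · intro h
    filter_upwards [h] with i hi
    exact hi
  · intro h
    filter_upwards [h] with i hi
    exact hi


lemma ueRel_iff (u v : Ultrafilter ℕ) : ueRel Srel u v ↔ UfSide.tau u = v := by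
  have hR : ∀ X : Set ℕ, Rminus Srel X = (fun n : ℕ => n + 1) ⁻¹' X := by
    intro X
    ext w
    constructor
    · rintro ⟨s, hs, rfl⟩
      exact hs
    · intro hw
      exact ⟨w + 1, hw, rfl⟩
  constructor
  · intro h
    rw [← Ultrafilter.coe_le_coe]
    rw [Filter.le_def]
    intro X hX
    have := h X hX
    rw [hR] at this
    exact Ultrafilter.mem_map.mpr this
  · intro h X hX
    rw [hR]
    rw [← h] at hX
    exact Ultrafilter.mem_map.mp hX


end Aux

/-- some ultrapower of `⟨ℕ,S⟩` is isomorphic, as a directed graph, to the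
ultrafilter extension `⟨Uf(ℕ), S^ue⟩` (the ultrapower is realized as germs modulo `D`). -/
theorem stmt_8 :
    ∃ (I : Type) (D : Ultrafilter I) (h : (D : Filter I).Germ ℕ → Ultrafilter ℕ),
      Function.Bijective h ∧
      ∀ f g : (D : Filter I).Germ ℕ,
        Filter.Germ.LiftRel Srel f g ↔ ueRel Srel (h f) (h g) := by
  obtain ⟨h, hbij, hcomm⟩ := MonoUnary.exists_iso GermSide.sg UfSide.tau
    (↑(fun _ : GermSide.Idx => 0)) (pure 0) GermSide.sg_inj UfSide.tau_inj
    GermSide.sg_acyc UfSide.tau_acyc GermSide.sg_base UfSide.tau_base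
    GermSide.sg_tricho UfSide.tau_tricho
    (by rw [GermSide.germ_inf_card, UfSide.uf_inf_card])
    (by rw [GermSide.germ_inf_card]; exact UfSide.aleph0_lt_big)
  refine ⟨GermSide.Idx, GermSide.D, h, hbij, fun f g => ?_⟩
  rw [liftRel_iff, ueRel_iff]
  constructor
  · rintro rfl
    exact (hcomm f).symm
  · intro he
    apply hbij.1
    rw [hcomm f, he]
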